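/- If $\hat P$ is the best rank-$k$ approximation (in operator norm, via truncated SVD) of $X = P + E$, where $P$ has rank at most $k$, then $\|\hat P - P\|_F \leq 2\sqrt{2k}\,\|E\|_{op}$. -/

import Mathlib

open Matrix Finset

noncomputable def vnorm {ι : Type*} [Fintype ι] (v : ι → ℝ) : ℝ :=
  Real.sqrt (∑ i, v i ^ 2)

noncomputable def opNorm {m n : Type*} [Fintype m] [Fintype n]
    (A : Matrix m n ℝ) : ℝ :=
  ⨆ v : {v : n → ℝ // vnorm v ≤ 1}, vnorm (A.mulVec v)

noncomputable def frobNorm {m n : Type*} [Fintype m] [Fintype n]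
    (A : Matrix m n ℝ) : ℝ :=
  Real.sqrt (∑ i, ∑ j, A i j ^ 2)

lemma vnorm_eq {n : ℕ} (v : Fin n → ℝ) :
    vnorm v = ‖(WithLp.equiv 2 (Fin n → ℝ)).symm v‖ := by
  rw [EuclideanSpace.norm_eq, vnorm]
  simp [Real.norm_eq_abs, sq_abs]

noncomputable def clm {p n : ℕ} (A : Matrix (Fin p) (Fin n) ℝ) :
    EuclideanSpace ℝ (Fin n) →L[ℝ] EuclideanSpace ℝ (Fin p) :=
  LinearMap.toContinuousLinearMap (Matrix.toEuclideanLin A)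

lemma clm_apply {p n : ℕ} (A : Matrix (Fin p) (Fin n) ℝ) (v : Fin n → ℝ) :
    clm A ((WithLp.equiv 2 _).symm v) = (WithLp.equiv 2 _).symm (A.mulVec v) := by
  simp [clm, Matrix.toEuclideanLin_apply_piLp_toLp, Matrix.toLin'_apply]

lemma clm_add {p n : ℕ} (A B : Matrix (Fin p) (Fin n) ℝ) :
    clm (A + B) = clm A + clm B := by
  apply ContinuousLinearMap.ext
  intro x
  show (Matrix.toEuclideanLin (A + B)) x = (Matrix.toEuclideanLin A) x + (Matrix.toEuclideanLin B) x
  rw [map_add Matrix.toEuclideanLin]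
  rfl

lemma clm_neg {p n : ℕ} (A : Matrix (Fin p) (Fin n) ℝ) :
    clm (-A) = -clm A := by
  apply ContinuousLinearMap.ext
  intro x
  show (Matrix.toEuclideanLin (-A)) x = -((Matrix.toEuclideanLin A) x)
  rw [map_neg Matrix.toEuclideanLin]
  rfl

lemma opNorm_eq {p n : ℕ} (A : Matrix (Fin p) (Fin n) ℝ) : opNorm A = ‖clm A‖ := by
  rw [← ContinuousLinearMap.sSup_unitClosedBall_eq_norm (clm A), opNorm]
  rw [iSup]
  congr 1
  ext y
  constructor
  · rintro ⟨⟨v, hv⟩, rfl⟩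
    refine ⟨(WithLp.equiv 2 _).symm v, ?_, ?_⟩
    · rw [Metric.mem_closedBall, dist_zero_right]; rw [vnorm_eq] at hv; exact hv
    · show ‖(clm A) _‖ = _
      rw [clm_apply, ← vnorm_eq]
  · rintro ⟨x, hx, rfl⟩
    refine ⟨⟨WithLp.equiv 2 _ x, ?_⟩, ?_⟩
    · rw [vnorm_eq]; simpa using (dist_zero_right x ▸ Metric.mem_closedBall.mp hx)
    · show vnorm _ = _
      rw [vnorm_eq, ← clm_apply]
      simp

lemma opNorm_nonneg' {p n : ℕ} (A : Matrix (Fin p) (Fin n) ℝ) : 0 ≤ opNorm A := by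
  rw [opNorm_eq]; exact norm_nonneg _

lemma opNorm_add_le' {p n : ℕ} (A B : Matrix (Fin p) (Fin n) ℝ) :
    opNorm (A + B) ≤ opNorm A + opNorm B := by
  rw [opNorm_eq, opNorm_eq, opNorm_eq, clm_add]
  exact norm_add_le _ _

lemma opNorm_neg' {p n : ℕ} (A : Matrix (Fin p) (Fin n) ℝ) : opNorm (-A) = opNorm A := by
  rw [opNorm_eq, opNorm_eq, clm_neg, norm_neg]

lemma toEuclideanLin_comp {p n : ℕ} (A : Matrix (Fin p) (Fin n) ℝ) :
    (Matrix.toEuclideanLin A : EuclideanSpace ℝ (Fin n) →ₗ[ℝ] EuclideanSpace ℝ (Fin p)) =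
      ((WithLp.linearEquiv 2 ℝ (Fin p → ℝ)).symm.toLinearMap.comp A.mulVecLin).comp
        (WithLp.linearEquiv 2 ℝ (Fin n → ℝ)).toLinearMap := by
  apply LinearMap.ext
  intro v
  simp [Matrix.toEuclideanLin_apply, Matrix.toLin'_apply]

lemma finrank_range_toEuclideanLin {p n : ℕ} (A : Matrix (Fin p) (Fin n) ℝ) :
    Module.finrank ℝ (LinearMap.range (Matrix.toEuclideanLin A)) = A.rank := by
  rw [Matrix.rank, toEuclideanLin_comp]
  rw [LinearMap.range_comp_of_range_eq_top _ (LinearEquiv.range _), LinearMap.range_comp]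
  exact LinearEquiv.finrank_map_eq _ _

lemma rank_sub_le' {p n : ℕ} (B C : Matrix (Fin p) (Fin n) ℝ) :
    (B - C).rank ≤ B.rank + C.rank := by
  rw [Matrix.rank, Matrix.rank, Matrix.rank]
  have hle : LinearMap.range (B - C).mulVecLin ≤
      LinearMap.range B.mulVecLin ⊔ LinearMap.range C.mulVecLin := by
    rintro x ⟨v, rfl⟩
    have : (B - C).mulVecLin v = B.mulVecLin v - C.mulVecLin v := by
      simp [Matrix.mulVecLin_apply, Matrix.sub_mulVec]
    rw [this, sub_eq_add_neg]
    exact Submodule.add_mem_sup (LinearMap.mem_range_self _ v)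
      (neg_mem (LinearMap.mem_range_self _ v))
  calc Module.finrank ℝ (LinearMap.range (B - C).mulVecLin)
      ≤ Module.finrank ℝ (LinearMap.range B.mulVecLin ⊔ LinearMap.range C.mulVecLin :
          Submodule ℝ (Fin p → ℝ)) := Submodule.finrank_mono hle
    _ ≤ _ := Submodule.finrank_add_le_finrank_add_finrank _ _

lemma sum4_comm {a b c e : ℕ} (f : Fin a → Fin b → Fin c → Fin e → ℝ) :
    ∑ i, ∑ j, ∑ s, ∑ t, f i j s t = ∑ s, ∑ t, ∑ j, ∑ i, f i j s t := by
  calc ∑ i, ∑ j, ∑ s, ∑ t, f i j s t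
      = ∑ i, ∑ s, ∑ j, ∑ t, f i j s t :=
        Finset.sum_congr rfl fun i _ => Finset.sum_comm
    _ = ∑ s, ∑ i, ∑ j, ∑ t, f i j s t := Finset.sum_comm
    _ = ∑ s, ∑ i, ∑ t, ∑ j, f i j s t :=
        Finset.sum_congr rfl fun s _ => Finset.sum_congr rfl fun i _ => Finset.sum_comm
    _ = ∑ s, ∑ t, ∑ i, ∑ j, f i j s t :=
        Finset.sum_congr rfl fun s _ => Finset.sum_comm
    _ = ∑ s, ∑ t, ∑ j, ∑ i, f i j s t :=
        Finset.sum_congr rfl fun s _ => Finset.sum_congr rfl fun t _ => Finset.sum_comm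

open RealInnerProductSpace in
lemma frob_le_sqrt_rank_mul {p n : ℕ} (A : Matrix (Fin p) (Fin n) ℝ) :
    frobNorm A ≤ Real.sqrt A.rank * ‖clm A‖ := by
  classical
  set f := (Matrix.toEuclideanLin A :
    EuclideanSpace ℝ (Fin n) →ₗ[ℝ] EuclideanSpace ℝ (Fin p)) with hf
  set K := LinearMap.ker f with hK
  set V := Kᗮ with hV
  have hd : Module.finrank ℝ V = A.rank := by
    have h1 : Module.finrank ℝ K + Module.finrank ℝ V = n := by
      simpa [finrank_euclideanSpace_fin] using
        Submodule.finrank_add_finrank_orthogonal (K := K)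
    have h2 : Module.finrank ℝ (LinearMap.range f) + Module.finrank ℝ K = n := by
      simpa [finrank_euclideanSpace_fin] using LinearMap.finrank_range_add_finrank_ker f
    have h3 : Module.finrank ℝ (LinearMap.range f) = A.rank := finrank_range_toEuclideanLin A
    omega
  set d := Module.finrank ℝ V with hdd
  set b := stdOrthonormalBasis ℝ V with hb
  set v : Fin d → EuclideanSpace ℝ (Fin n) := fun t => (b t : EuclideanSpace ℝ (Fin n)) with hv
  have hon : Orthonormal ℝ v := by
    rw [orthonormal_iff_ite]
    intro s t
    have := (orthonormal_iff_ite.mp b.orthonormal) s t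
    rwa [Submodule.coe_inner] at this
  have honc : ∀ s t, ⟪v s, v t⟫ = if s = t then (1:ℝ) else 0 :=
    orthonormal_iff_ite.mp hon
  -- key claim
  have key : ∀ x : EuclideanSpace ℝ (Fin n), f x = ∑ t, ⟪v t, x⟫ • f (v t) := by
    intro x
    have hmem : x - ∑ t, ⟪v t, x⟫ • v t ∈ Vᗮ := by
      rw [Submodule.mem_orthogonal]
      intro u hu
      have hrep : u = ∑ t, b.repr ⟨u, hu⟩ t • v t := by
        have h := congrArg (Subtype.val) (b.sum_repr ⟨u, hu⟩)
        simp only [Submodule.coe_sum, SetLike.val_smul] at h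
        exact h.symm
      rw [hrep, sum_inner]
      apply Finset.sum_eq_zero
      intro s _
      rw [real_inner_smul_left, inner_sub_right, inner_sum]
      have : ∑ t, ⟪v s, ⟪v t, x⟫ • v t⟫ = ⟪v s, x⟫ := by
        rw [Finset.sum_eq_single s]
        · rw [real_inner_smul_right, honc s s, if_pos rfl, mul_one, real_inner_comm]
        · intro t _ hts
          rw [real_inner_smul_right, honc s t, if_neg (Ne.symm hts), mul_zero]
        · intro h; exact absurd (Finset.mem_univ s) h
      rw [this, sub_self, mul_zero]
    have hmemK : x - ∑ t, ⟪v t, x⟫ • v t ∈ K := by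
      rw [hV, Submodule.orthogonal_orthogonal] at hmem
      exact hmem
    have h0 : f (x - ∑ t, ⟪v t, x⟫ • v t) = 0 := hmemK
    rw [map_sub, sub_eq_zero] at h0
    rw [h0, map_sum]
    simp_rw [_root_.map_smul]
  -- coordinates
  set w : Fin d → Fin n → ℝ := fun t => WithLp.equiv 2 (Fin n → ℝ) (v t) with hw
  set M : Fin d → Fin p → ℝ := fun t => WithLp.equiv 2 (Fin p → ℝ) (f (v t)) with hM
  have hA : ∀ i j, A i j = ∑ t, w t j * M t i := by
    intro i j
    have hx := key ((WithLp.equiv 2 (Fin n → ℝ)).symm (Pi.single j 1))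
    have hinner : ∀ t, ⟪v t, (WithLp.equiv 2 (Fin n → ℝ)).symm (Pi.single j 1)⟫ = w t j := by
      intro t
      rw [PiLp.inner_apply]
      simp [RCLike.inner_apply, Pi.single_apply, hw]
    have hleft : f ((WithLp.equiv 2 (Fin n → ℝ)).symm (Pi.single j 1)) =
        (WithLp.equiv 2 (Fin p → ℝ)).symm (A.mulVec (Pi.single j 1)) := by
      rw [hf]; exact Matrix.toEuclideanLin_apply_piLp_toLp A _
    rw [hleft] at hx
    have hcoord := congrArg (fun y => WithLp.equiv 2 (Fin p → ℝ) y i) hx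
    have hlhs : A.mulVec (Pi.single j 1) i = A i j := by
      simp [Matrix.mulVec_single]
    rw [show WithLp.equiv 2 (Fin p → ℝ) ((WithLp.equiv 2 (Fin p → ℝ)).symm
      (A.mulVec (Pi.single j 1))) = A.mulVec (Pi.single j 1) from rfl] at hcoord
    rw [← hlhs, hcoord]
    simp_rw [hinner]
    simp only [hM, WithLp.equiv_apply, WithLp.ofLp_sum, WithLp.ofLp_smul, Finset.sum_apply, Pi.smul_apply, smul_eq_mul]
  have hwsum : ∀ s t, ∑ j, w s j * w t j = if s = t then (1:ℝ) else 0 := by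
    intro s t
    rw [← honc s t, PiLp.inner_apply]
    simp [RCLike.inner_apply]
    exact Finset.sum_congr rfl fun j _ => mul_comm _ _
  have hMnorm : ∀ t, ∑ i, M t i ^ 2 ≤ ‖clm A‖ ^ 2 := by
    intro t
    have h1 : ‖f (v t)‖ ≤ ‖clm A‖ := by
      have h2 := (clm A).le_opNorm (v t)
      have hvt : ‖v t‖ = 1 := b.orthonormal.1 t
      rw [hvt, mul_one] at h2
      exact h2
    have h3 : ∑ i, M t i ^ 2 = ‖f (v t)‖ ^ 2 := by
      have : f (v t) = (WithLp.equiv 2 (Fin p → ℝ)).symm (M t) := rfl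
      rw [this, ← vnorm_eq, vnorm, Real.sq_sqrt]
      positivity
    rw [h3]
    have := norm_nonneg (f (v t))
    nlinarith
  have hsum : ∑ i, ∑ j, A i j ^ 2 ≤ (d : ℝ) * ‖clm A‖ ^ 2 := by
    have e2 : ∀ i j, A i j ^ 2 = ∑ s, ∑ t, (w s j * w t j) * (M s i * M t i) := by
      intro i j
      rw [hA i j, sq, Finset.sum_mul_sum]
      apply Finset.sum_congr rfl; intro s _
      apply Finset.sum_congr rfl; intro t _
      ring
    have e1 : ∑ i, ∑ j, A i j ^ 2
        = ∑ s, ∑ t, (∑ j, w s j * w t j) * (∑ i, M s i * M t i) := by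
      simp_rw [e2]
      rw [sum4_comm]
      apply Finset.sum_congr rfl; intro s _
      apply Finset.sum_congr rfl; intro t _
      rw [Finset.sum_mul_sum]
    have e4 : ∑ s, ∑ t, (∑ j, w s j * w t j) * (∑ i, M s i * M t i)
        = ∑ t, ∑ i, M t i ^ 2 := by
      simp_rw [hwsum, ite_mul, one_mul, zero_mul]
      rw [Finset.sum_congr rfl (fun s _ => Finset.sum_ite_eq Finset.univ s
        (fun t => ∑ i, M s i * M t i))]
      simp [sq]
    rw [e1, e4]
    calc ∑ t, ∑ i, M t i ^ 2 ≤ ∑ _t : Fin d, ‖clm A‖ ^ 2 :=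
          Finset.sum_le_sum fun t _ => hMnorm t
      _ = (d : ℝ) * ‖clm A‖ ^ 2 := by simp [mul_comm]
  rw [frobNorm, ← hd]
  calc Real.sqrt (∑ i, ∑ j, A i j ^ 2) ≤ Real.sqrt ((d : ℝ) * ‖clm A‖ ^ 2) :=
        Real.sqrt_le_sqrt hsum
    _ = Real.sqrt d * ‖clm A‖ := by
        rw [Real.sqrt_mul (by positivity), Real.sqrt_sq (norm_nonneg _)]

theorem best_rank_k_approx_frobenius_bound (p n k : ℕ)
    (X P E Phat : Matrix (Fin p) (Fin n) ℝ)
    (hX : X = P + E) (hrankP : P.rank ≤ k) (hrankPhat : Phat.rank ≤ k)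
    (hbest : opNorm (Phat - X) ≤ opNorm (P - X)) :
    frobNorm (Phat - P) ≤ 2 * Real.sqrt (2 * k) * opNorm E := by
  have hPX : P - X = -E := by rw [hX]; abel
  have hop : opNorm (Phat - P) ≤ 2 * opNorm E := by
    have h1 : Phat - P = (Phat - X) + (X - P) := by abel
    have h2 : opNorm (X - P) = opNorm (P - X) := by
      rw [show X - P = -(P - X) by abel, opNorm_neg']
    have h3 : opNorm (P - X) = opNorm E := by rw [hPX, opNorm_neg']
    calc opNorm (Phat - P) ≤ opNorm (Phat - X) + opNorm (X - P) := h1 ▸ opNorm_add_le' _ _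
      _ ≤ opNorm (P - X) + opNorm (P - X) := by rw [h2]; linarith
      _ = 2 * opNorm E := by rw [h3]; ring
  have hrank : ((Phat - P).rank : ℝ) ≤ 2 * k := by
    have := rank_sub_le' Phat P
    have h2k : (Phat - P).rank ≤ 2 * k := by omega
    exact_mod_cast h2k
  have hsqrt : Real.sqrt ((Phat - P).rank) ≤ Real.sqrt (2 * k) := by
    exact Real.sqrt_le_sqrt hrank
  calc frobNorm (Phat - P) ≤ Real.sqrt ((Phat - P).rank) * ‖clm (Phat - P)‖ :=
        frob_le_sqrt_rank_mul _
    _ = Real.sqrt ((Phat - P).rank) * opNorm (Phat - P) := by rw [opNorm_eq]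
    _ ≤ Real.sqrt (2 * k) * (2 * opNorm E) := by
        apply mul_le_mul hsqrt hop (opNorm_nonneg' _) (Real.sqrt_nonneg _)
    _ = 2 * Real.sqrt (2 * k) * opNorm E := by ring
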